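/- arXiv:2005.11601 — 2 statements merged into one kernel-verified Lean document; each statement's English description precedes it below -/
import Mathlib

section
/- Let k ≥ 0 be an integer and n = 8k+6, let a, b, c be the generators of the Weierstrass group W_n, and set A = c·b·a (so A = −[[1, 8k+8], [0, 1]]). Then the element γ = a·A^k·c·a·b·a·b·a·c of W_{8k+6} satisfies |tr γ| = (4k+3)² + 1/(4k+3)² > 2, and (1, 1) is an eigenvector of γ. Hence γ is a hyperbolic element of W_{8k+6} fixing the boundary point 1, i.e. a special element of W_{8k+6}. -/
noncomputable section

open Matrix

abbrev SL2R := Matrix.SpecialLinearGroup (Fin 2) ℝ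

/-- Generator `a` of the Weierstrass groups. -/
def Wa : SL2R := ⟨!![1, 2; -1, -1], by norm_num [Matrix.det_fin_two_of]⟩

/-- Generator `b = √n · [[1,1],[-(n+1)/n,-1]]` of the `n`-th Weierstrass group. -/
def Wb (n : ℕ) (hn : 0 < n) : SL2R :=
  ⟨Real.sqrt n • !![1, 1; -((n : ℝ) + 1) / n, -1], by
    have h0 : (0:ℝ) ≤ n := Nat.cast_nonneg n
    have hne : (n : ℝ) ≠ 0 := Nat.cast_ne_zero.mpr hn.ne'
    have h : Real.sqrt n ^ 2 = n := Real.sq_sqrt h0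
    rw [Matrix.det_smul]
    simp only [Matrix.det_fin_two_of, Fintype.card_fin]
    field_simp
    rw [h]; ring⟩

/-- Generator `c = (1/√n) · [[0,n],[-1,0]]` of the `n`-th Weierstrass group. -/
def Wc (n : ℕ) (hn : 0 < n) : SL2R :=
  ⟨(1 / Real.sqrt n) • !![0, (n : ℝ); -1, 0], by
    have h0 : (0:ℝ) ≤ n := Nat.cast_nonneg n
    have hne : (n : ℝ) ≠ 0 := Nat.cast_ne_zero.mpr hn.ne'
    have h : Real.sqrt n ^ 2 = n := Real.sq_sqrt h0
    have hs : Real.sqrt n ≠ 0 := by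
      intro hs; rw [hs] at h; simp at h; exact hne h.symm
    rw [Matrix.det_smul]
    simp only [Matrix.det_fin_two_of, Fintype.card_fin]
    field_simp
    rw [h]; ring⟩

/-- The `n`-th Weierstrass group. -/
def W (n : ℕ) (hn : 0 < n) : Subgroup SL2R :=
  Subgroup.closure {Wa, Wb n hn, Wc n hn}

/-- `γ` fixes the boundary point `x ∈ ℝ`: `(x,1)` is an eigenvector of `γ`. -/
def FixesBoundary (γ : SL2R) (x : ℝ) : Prop :=
  ∃ t : ℝ, t ≠ 0 ∧ (γ : Matrix (Fin 2) (Fin 2) ℝ).mulVec ![x, 1] = t • ![x, 1]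

/-- `γ` fixes the boundary point `∞`: `(1,0)` is an eigenvector of `γ`. -/
def FixesInfty (γ : SL2R) : Prop :=
  ∃ t : ℝ, t ≠ 0 ∧ (γ : Matrix (Fin 2) (Fin 2) ℝ).mulVec ![1, 0] = t • ![1, 0]

/-- `γ ∈ SL(2,ℝ)` is parabolic: `γ ≠ ±1` and `|tr γ| = 2`. -/
def IsParabolic (γ : SL2R) : Prop :=
  γ ≠ 1 ∧ γ ≠ -1 ∧ |Matrix.trace (γ : Matrix (Fin 2) (Fin 2) ℝ)| = 2

/-- `γ ∈ SL(2,ℝ)` is hyperbolic: `|tr γ| > 2`. -/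
def IsHyperbolic (γ : SL2R) : Prop :=
  2 < |Matrix.trace (γ : Matrix (Fin 2) (Fin 2) ℝ)|

/-- The element `γ = a·A^k·c·a·b·a·b·a·c` of the Weierstrass group `W_{8k+6}`,
where `A = c·b·a`. -/
def specialW8k6 (k : ℕ) : SL2R :=
  Wa * (Wc (8 * k + 6) (by omega) * Wb (8 * k + 6) (by omega) * Wa) ^ k *
    Wc (8 * k + 6) (by omega) * Wa * Wb (8 * k + 6) (by omega) * Wa *
    Wb (8 * k + 6) (by omega) * Wa * Wc (8 * k + 6) (by omega)

lemma negU_pow (x : ℝ) : ∀ j : ℕ,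
    (-(!![1, x; 0, 1]) : Matrix (Fin 2) (Fin 2) ℝ) ^ j
      = ((-1:ℝ)) ^ j • !![1, j * x; 0, 1]
  | 0 => by simp [Matrix.one_fin_two]
  | j+1 => by
      rw [pow_succ, negU_pow x j]
      ext i jj
      fin_cases i <;> fin_cases jj <;>
        simp [Matrix.mul_apply, Fin.sum_univ_two] <;> ring

lemma cba_coe (k : ℕ) :
    ((Wc (8 * k + 6) (by omega) * Wb (8 * k + 6) (by omega) * Wa : SL2R) :
        Matrix (Fin 2) (Fin 2) ℝ) = -(!![1, 8 * (k : ℝ) + 8; 0, 1]) := by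
  have hn : ((8 * k + 6 : ℕ) : ℝ) ≠ 0 := by positivity
  set s := Real.sqrt ((8 * k + 6 : ℕ) : ℝ) with hsd
  have hs : s ≠ 0 := by rw [hsd, Real.sqrt_ne_zero']; positivity
  have hs2 : s ^ 2 = ((8 * k + 6 : ℕ) : ℝ) := Real.sq_sqrt (by positivity)
  rw [Matrix.SpecialLinearGroup.coe_mul, Matrix.SpecialLinearGroup.coe_mul]
  ext i j
  fin_cases i <;> fin_cases j <;>
    · simp [Wa, Wb, Wc, Matrix.mul_apply, Fin.sum_univ_two]
      try field_simp
      try ring_nf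
      try simp only [Real.sq_sqrt (show (0:ℝ) ≤ 6 + (k:ℝ) * 8 by positivity)]
      try push_cast
      try ring

set_option maxHeartbeats 4000000 in
lemma gamma_coe (k : ℕ) :
    ((specialW8k6 k : SL2R) : Matrix (Fin 2) (Fin 2) ℝ)
      = ((-1:ℝ)) ^ k •
        !![(128*(k:ℝ)^4+384*(k:ℝ)^3+440*(k:ℝ)^2+232*(k:ℝ)+49)/(4*(k:ℝ)+3)^2,
           -(32*(k:ℝ)^3+72*(k:ℝ)^2+56*(k:ℝ)+16)/(4*(k:ℝ)+3);
           -(128*(k:ℝ)^4+384*(k:ℝ)^3+424*(k:ℝ)^2+200*(k:ℝ)+32)/(4*(k:ℝ)+3)^2,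
           (32*(k:ℝ)^3+72*(k:ℝ)^2+52*(k:ℝ)+11)/(4*(k:ℝ)+3)] := by
  have hn : ((8 * k + 6 : ℕ) : ℝ) ≠ 0 := by positivity
  have hm : (4*(k:ℝ)+3) ≠ 0 := by positivity
  set s := Real.sqrt ((8 * k + 6 : ℕ) : ℝ) with hsd
  have hs : s ≠ 0 := by rw [hsd, Real.sqrt_ne_zero']; positivity
  have hx : (0:ℝ) ≤ 6 + (k:ℝ) * 8 := by positivity
  have h2 : Real.sqrt (6 + (k:ℝ) * 8) ^ 2 = 6 + (k:ℝ) * 8 := Real.sq_sqrt hx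
  have h4 : Real.sqrt (6 + (k:ℝ) * 8) ^ 4 = (6 + (k:ℝ) * 8) ^ 2 := by
    calc Real.sqrt (6 + (k:ℝ) * 8) ^ 4 = (Real.sqrt (6 + (k:ℝ) * 8) ^ 2) ^ 2 := by ring
      _ = (6 + (k:ℝ) * 8) ^ 2 := by rw [h2]
  have h6 : Real.sqrt (6 + (k:ℝ) * 8) ^ 6 = (6 + (k:ℝ) * 8) ^ 3 := by
    calc Real.sqrt (6 + (k:ℝ) * 8) ^ 6 = (Real.sqrt (6 + (k:ℝ) * 8) ^ 2) ^ 3 := by ring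
      _ = (6 + (k:ℝ) * 8) ^ 3 := by rw [h2]
  have h3 : Real.sqrt (6 + (k:ℝ) * 8) ^ 3 = (6 + (k:ℝ) * 8) * Real.sqrt (6 + (k:ℝ) * 8) := by
    calc Real.sqrt (6 + (k:ℝ) * 8) ^ 3
        = (Real.sqrt (6 + (k:ℝ) * 8) ^ 2) * Real.sqrt (6 + (k:ℝ) * 8) := by ring
      _ = _ := by rw [h2]
  have h5 : Real.sqrt (6 + (k:ℝ) * 8) ^ 5 = (6 + (k:ℝ) * 8) ^ 2 * Real.sqrt (6 + (k:ℝ) * 8) := by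
    calc Real.sqrt (6 + (k:ℝ) * 8) ^ 5
        = (Real.sqrt (6 + (k:ℝ) * 8) ^ 2) ^ 2 * Real.sqrt (6 + (k:ℝ) * 8) := by ring
      _ = _ := by rw [h2]
  have h7 : Real.sqrt (6 + (k:ℝ) * 8) ^ 7 = (6 + (k:ℝ) * 8) ^ 3 * Real.sqrt (6 + (k:ℝ) * 8) := by
    calc Real.sqrt (6 + (k:ℝ) * 8) ^ 7
        = (Real.sqrt (6 + (k:ℝ) * 8) ^ 2) ^ 3 * Real.sqrt (6 + (k:ℝ) * 8) := by ring
      _ = _ := by rw [h2]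
  unfold specialW8k6
  simp only [Matrix.SpecialLinearGroup.coe_mul, Matrix.SpecialLinearGroup.coe_pow]
  have hcba : ((Wc (8 * k + 6) (by omega) : SL2R) : Matrix (Fin 2) (Fin 2) ℝ) *
      ((Wb (8 * k + 6) (by omega) : SL2R) : Matrix (Fin 2) (Fin 2) ℝ) *
      ((Wa : SL2R) : Matrix (Fin 2) (Fin 2) ℝ) = -(!![1, 8 * (k : ℝ) + 8; 0, 1]) := by
    have := cba_coe k
    simpa [Matrix.SpecialLinearGroup.coe_mul] using this
  rw [hcba, negU_pow]
  ext i j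
  fin_cases i <;> fin_cases j <;>
    · simp [Wa, Wb, Wc, Matrix.mul_apply, Fin.sum_univ_two]
      try field_simp
      try ring_nf
      try simp only [h2, h3, h4, h5, h6, h7]
      try push_cast
      try ring

/-- For `k ≥ 0` and `n = 8k+6`: `A = c·b·a = −[[1, 8k+8], [0, 1]]`, and
`γ = a·A^k·c·a·b·a·b·a·c` satisfies `|tr γ| = (4k+3)² + 1/(4k+3)² > 2` and has
`(1, 1)` as an eigenvector; hence `γ` is a special (hyperbolic) element of
`W_{8k+6}` fixing the boundary point `1`. -/
theorem weierstrass_8k6_special (k : ℕ) :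
    (Wc (8 * k + 6) (by omega) * Wb (8 * k + 6) (by omega) * Wa =
      -(show SL2R from
        ⟨!![1, 8 * (k : ℝ) + 8; 0, 1], by norm_num [Matrix.det_fin_two_of]⟩)) ∧
    |Matrix.trace ((specialW8k6 k : SL2R) : Matrix (Fin 2) (Fin 2) ℝ)| =
      (4 * (k : ℝ) + 3) ^ 2 + 1 / (4 * (k : ℝ) + 3) ^ 2 ∧
    2 < |Matrix.trace ((specialW8k6 k : SL2R) : Matrix (Fin 2) (Fin 2) ℝ)| ∧
    (∃ t : ℝ, t ≠ 0 ∧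
      ((specialW8k6 k : SL2R) : Matrix (Fin 2) (Fin 2) ℝ).mulVec ![1, 1] = t • ![1, 1]) ∧
    IsHyperbolic (specialW8k6 k) ∧
    FixesBoundary (specialW8k6 k) 1 ∧
    specialW8k6 k ∈ W (8 * k + 6) (by omega) := by
  have hm0 : (0:ℝ) < 4 * (k:ℝ) + 3 := by positivity
  have hm : (4 * (k:ℝ) + 3) ≠ 0 := ne_of_gt hm0
  have hG := gamma_coe k
  have htr : Matrix.trace ((specialW8k6 k : SL2R) : Matrix (Fin 2) (Fin 2) ℝ)
      = (-1:ℝ) ^ k * ((4 * (k:ℝ) + 3) ^ 2 + 1 / (4 * (k:ℝ) + 3) ^ 2) := by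
    rw [hG, Matrix.trace_smul, Matrix.trace_fin_two_of, smul_eq_mul]
    field_simp
    ring
  have habs : |Matrix.trace ((specialW8k6 k : SL2R) : Matrix (Fin 2) (Fin 2) ℝ)|
      = (4 * (k:ℝ) + 3) ^ 2 + 1 / (4 * (k:ℝ) + 3) ^ 2 := by
    rw [htr, abs_mul, abs_pow, abs_neg, abs_one, one_pow, one_mul,
      abs_of_pos (by positivity)]
  have hgt : 2 < |Matrix.trace ((specialW8k6 k : SL2R) : Matrix (Fin 2) (Fin 2) ℝ)| := by
    rw [habs]
    have h9 : (9:ℝ) ≤ (4 * (k:ℝ) + 3) ^ 2 := by nlinarith [Nat.cast_nonneg (α := ℝ) k]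
    have hp : (0:ℝ) < 1 / (4 * (k:ℝ) + 3) ^ 2 := by positivity
    linarith
  have hev : ((specialW8k6 k : SL2R) : Matrix (Fin 2) (Fin 2) ℝ).mulVec ![1, 1]
      = ((-1:ℝ) ^ k / (4 * (k:ℝ) + 3) ^ 2) • ![1, 1] := by
    rw [hG]
    ext i
    fin_cases i <;>
      · simp [Matrix.mulVec, dotProduct, Fin.sum_univ_two]
        field_simp
        ring
  have htne : ((-1:ℝ) ^ k / (4 * (k:ℝ) + 3) ^ 2) ≠ 0 :=
    div_ne_zero (pow_ne_zero _ (by norm_num)) (pow_ne_zero _ hm)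
  refine ⟨?_, habs, hgt, ⟨_, htne, hev⟩, hgt, ⟨_, htne, hev⟩, ?_⟩
  · exact Subtype.ext (cba_coe k)
  · have ha : Wa ∈ W (8 * k + 6) (by omega) :=
      Subgroup.subset_closure (Set.mem_insert _ _)
    have hb : Wb (8 * k + 6) (by omega) ∈ W (8 * k + 6) (by omega) :=
      Subgroup.subset_closure (Set.mem_insert_of_mem _ (Set.mem_insert _ _))
    have hc : Wc (8 * k + 6) (by omega) ∈ W (8 * k + 6) (by omega) :=
      Subgroup.subset_closure
        (Set.mem_insert_of_mem _ (Set.mem_insert_of_mem _ rfl))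
    exact mul_mem (mul_mem (mul_mem (mul_mem (mul_mem (mul_mem (mul_mem
      (mul_mem ha (pow_mem (mul_mem (mul_mem hc hb) ha) k)) hc) ha) hb) ha) hb) ha) hc
end
end

section
/- For every integer n ≥ 6 with n ≡ 0, 2, or 6 (mod 8), the Weierstrass group W_n is not pseudomodular: it is not the case that W_n is both a discrete subgroup of SL(2,ℝ) and has cusp set equal to ℚ ∪ {∞}. -/
noncomputable section

open Matrix

/-- The topology on `SL(2,ℝ)` inherited from the space of real `2×2` matrices. -/
instance : TopologicalSpace SL2R :=
  TopologicalSpace.induced (fun g => (g : Matrix (Fin 2) (Fin 2) ℝ)) inferInstance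

section Keystone

local notation "M2" => Matrix (Fin 2) (Fin 2) ℝ

/-- The rank-one nilpotent attached to the boundary point `x`. -/
def U0 (x : ℝ) : M2 := !![x, -x^2; 1, -x]

lemma parabolic_decomp (P : SL2R) (hpar : IsParabolic P) (x₀ : ℝ)
    (hfix : FixesBoundary P x₀) :
    ∃ s l : ℝ, (s = 1 ∨ s = -1) ∧ l ≠ 0 ∧
      (P : M2) = s • ((1 : M2) + l • U0 x₀) := by
  obtain ⟨t', ht'0, heig⟩ := hfix
  obtain ⟨α, β, γ, δ, hP⟩ : ∃ a b c d, (P : M2) = !![a, b; c, d] :=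
    ⟨_, _, _, _, Matrix.eta_fin_two _⟩
  rw [hP] at heig
  have e1 : α * x₀ + β = t' * x₀ := by
    have := congrFun heig 0
    simpa [Matrix.mulVec, dotProduct, Fin.sum_univ_two] using this
  have e2 : γ * x₀ + δ = t' := by
    have := congrFun heig 1
    simpa [Matrix.mulVec, dotProduct, Fin.sum_univ_two] using this
  have hdet : α * δ - β * γ = 1 := by
    have := P.2
    rw [hP, Matrix.det_fin_two_of] at this
    linarith
  have htr : α + δ = 2 ∨ α + δ = -2 := by
    have h2 := hpar.2.2
    rw [hP, Matrix.trace_fin_two_of] at h2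
    rcases (abs_eq (by norm_num : (0:ℝ) ≤ 2)).mp h2 with h | h
    · exact Or.inl h
    · exact Or.inr h
  obtain ⟨s, hs1, hstr⟩ : ∃ s : ℝ, (s = 1 ∨ s = -1) ∧ α + δ = 2 * s := by
    rcases htr with h | h
    · exact ⟨1, Or.inl rfl, by linarith⟩
    · exact ⟨-1, Or.inr rfl, by linarith⟩
  have hss : s * s = 1 := by rcases hs1 with h | h <;> rw [h] <;> norm_num
  have h1 : t' * (α - γ * x₀) = 1 := by linear_combination hdet - α * e2 + γ * e1
  have h2 : α - γ * x₀ = 2 * s - t' := by linear_combination hstr - e2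
  have hsq : (t' - s)^2 = 0 := by linear_combination t' * h2 - h1 + hss
  have key : t' = s := by
    have := pow_eq_zero_iff (n := 2) (by norm_num) |>.mp hsq
    linarith
  refine ⟨s, s * γ, hs1, ?_, ?_⟩
  · intro hl
    have hγ0 : γ = 0 := by
      rcases hs1 with h | h <;> rw [h] at hl <;> linarith
    have hδs : δ = s := by linear_combination e2 + key - x₀ * hγ0
    have hαs : α = s := by linarith
    have hβ0 : β = 0 := by linear_combination e1 - x₀ * hαs + x₀ * key
    rcases hs1 with h | h
    · apply hpar.1
      apply Subtype.ext
      rw [hP]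
      show _ = ((1 : SL2R) : M2)
      rw [Matrix.SpecialLinearGroup.coe_one]
      rw [show α = 1 by rw [hαs, h], hβ0, hγ0, show δ = 1 by rw [hδs, h]]
      ext i j
      fin_cases i <;> fin_cases j <;> simp [Matrix.one_apply]
    · apply hpar.2.1
      apply Subtype.ext
      rw [hP]
      show _ = ((-1 : SL2R) : M2)
      rw [Matrix.SpecialLinearGroup.coe_neg, Matrix.SpecialLinearGroup.coe_one]
      rw [show α = -1 by rw [hαs, h], hβ0, hγ0, show δ = -1 by rw [hδs, h]]
      ext i j
      fin_cases i <;> fin_cases j <;> simp [Matrix.one_apply]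
  · have hα2 : α = s + γ * x₀ := by linear_combination h2 - key
    have hβ2 : β = -(γ * x₀^2) := by linear_combination e1 - x₀ * hα2 + x₀ * key
    have hδ2 : δ = s - γ * x₀ := by linear_combination e2 + key
    rw [hP]
    ext i j
    fin_cases i <;> fin_cases j <;> simp [U0, Matrix.one_apply]
    · linear_combination hα2 - γ * x₀ * hss
    · linear_combination hβ2 + γ * x₀^2 * hss
    · linear_combination (-γ) * hss
    · linear_combination hδ2 + γ * x₀ * hss
end Keystone

section Keystone2

local notation "M2" => Matrix (Fin 2) (Fin 2) ℝ

lemma keystone (Γ : Subgroup SL2R) (hD : DiscreteTopology Γ)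
    (hneg : (-1 : SL2R) ∈ Γ)
    (H P : SL2R) (hH : H ∈ Γ) (hP : P ∈ Γ)
    (x₀ t : ℝ) (ht0 : t ≠ 0) (ht1 : |t| < 1)
    (hv : (H : M2).mulVec ![x₀, 1] = t • ![x₀, 1])
    (hw : Matrix.vecMul ![1, -x₀] (H : M2) = t⁻¹ • ![1, -x₀])
    (hpar : IsParabolic P) (hfix : FixesBoundary P x₀) : False := by
  obtain ⟨s, l, hs1, hl0, hPdec⟩ := parabolic_decomp P hpar x₀ hfix
  have hs0 : s ≠ 0 := by rcases hs1 with h | h <;> rw [h] <;> norm_num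
  -- scalar components
  have hv0 : (H : M2) 0 0 * x₀ + (H : M2) 0 1 = t * x₀ := by
    have := congrFun hv 0
    simpa [Matrix.mulVec, dotProduct, Fin.sum_univ_two] using this
  have hv1 : (H : M2) 1 0 * x₀ + (H : M2) 1 1 = t := by
    have := congrFun hv 1
    simpa [Matrix.mulVec, dotProduct, Fin.sum_univ_two] using this
  have hw0 : (H : M2) 0 0 - x₀ * (H : M2) 1 0 = t⁻¹ := by
    have := congrFun hw 0
    simpa [Matrix.vecMul, dotProduct, Fin.sum_univ_two, sub_eq_add_neg] using this
  have hw1 : (H : M2) 0 1 - x₀ * (H : M2) 1 1 = t⁻¹ * (-x₀) := by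
    have := congrFun hw 1
    simpa [Matrix.vecMul, dotProduct, Fin.sum_univ_two, sub_eq_add_neg] using this
  have hHU : (H : M2) * U0 x₀ = t • U0 x₀ := by
    ext i j
    fin_cases i <;> fin_cases j <;>
      simp [U0, Matrix.mul_apply, Fin.sum_univ_two]
    · linear_combination hv0
    · linear_combination (-x₀) * hv0
    · linear_combination hv1
    · linear_combination (-x₀) * hv1
  have hUH : U0 x₀ * (H : M2) = t⁻¹ • U0 x₀ := by
    ext i j
    fin_cases i <;> fin_cases j <;>
      simp [U0, Matrix.mul_apply, Fin.sum_univ_two]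
    · linear_combination x₀ * hw0
    · linear_combination x₀ * hw1
    · linear_combination hw0
    · linear_combination hw1
  have cancel : ∀ A B : M2, A * (H : M2) = B * (H : M2) → A = B := by
    intro A B hAB
    have h1 : (H : M2) * ((H⁻¹ : SL2R) : M2) = 1 := by
      rw [← Matrix.SpecialLinearGroup.coe_mul, mul_inv_cancel,
        Matrix.SpecialLinearGroup.coe_one]
    calc A = A * ((H : M2) * ((H⁻¹ : SL2R) : M2)) := by rw [h1, mul_one]
    _ = B * ((H : M2) * ((H⁻¹ : SL2R) : M2)) := by
        rw [← mul_assoc, ← mul_assoc, hAB]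
    _ = B := by rw [h1, mul_one]
  have expandR : ∀ μ : ℝ, (s • ((1 : M2) + μ • U0 x₀)) * (H : M2)
      = s • ((H : M2) + (μ * t⁻¹) • U0 x₀) := by
    intro μ
    rw [smul_mul_assoc, add_mul, one_mul, smul_mul_assoc, hUH, smul_smul]
  have expandL : ∀ μ : ℝ, (H : M2) * (s • ((1 : M2) + μ • U0 x₀))
      = s • ((H : M2) + (μ * t) • U0 x₀) := by
    intro μ
    rw [mul_smul_comm, mul_add, mul_one, mul_smul_comm, hHU, smul_smul]
  have conj : ∀ k : ℕ, ((H ^ k * P * (H ^ k)⁻¹ : SL2R) : M2)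
      = s • ((1 : M2) + (l * (t ^ 2) ^ k) • U0 x₀) := by
    intro k
    induction k with
    | zero => simpa using hPdec
    | succ k ih =>
      apply cancel
      have hgrp : (H ^ (k + 1) * P * (H ^ (k + 1))⁻¹) * H
          = H * (H ^ k * P * (H ^ k)⁻¹) := by
        group
      calc ((H ^ (k + 1) * P * (H ^ (k + 1))⁻¹ : SL2R) : M2) * (H : M2)
          = (((H ^ (k + 1) * P * (H ^ (k + 1))⁻¹) * H : SL2R) : M2) :=
            (Matrix.SpecialLinearGroup.coe_mul _ _).symm
        _ = ((H * (H ^ k * P * (H ^ k)⁻¹) : SL2R) : M2) := by rw [hgrp]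
        _ = (H : M2) * ((H ^ k * P * (H ^ k)⁻¹ : SL2R) : M2) := by
            rw [Matrix.SpecialLinearGroup.coe_mul]
        _ = (H : M2) * (s • ((1 : M2) + (l * (t ^ 2) ^ k) • U0 x₀)) := by rw [ih]
        _ = s • ((H : M2) + (l * (t ^ 2) ^ k * t) • U0 x₀) := expandL _
        _ = s • ((H : M2) + (l * (t ^ 2) ^ (k + 1) * t⁻¹) • U0 x₀) := by
            have hsc : l * (t ^ 2) ^ k * t = l * (t ^ 2) ^ (k + 1) * t⁻¹ := by
              field_simp
              ring
            rw [hsc]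
        _ = (s • ((1 : M2) + (l * (t ^ 2) ^ (k + 1)) • U0 x₀)) * (H : M2) :=
            (expandR _).symm
  -- the limit element
  set L : SL2R := if hs : s = 1 then 1 else -1 with hLdef
  have hLmem : L ∈ Γ := by
    rw [hLdef]
    split
    · exact one_mem Γ
    · exact hneg
  have hLcoe : (L : M2) = s • (1 : M2) := by
    rw [hLdef]
    rcases hs1 with h | h
    · rw [dif_pos h, h, Matrix.SpecialLinearGroup.coe_one, one_smul]
    · rw [dif_neg (by rw [h]; norm_num), h,
        Matrix.SpecialLinearGroup.coe_neg, Matrix.SpecialLinearGroup.coe_one]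
      simp
  -- the sequence in Γ
  have hmem : ∀ k : ℕ, H ^ k * P * (H ^ k)⁻¹ ∈ Γ := fun k =>
    mul_mem (mul_mem (pow_mem hH k) hP) (inv_mem (pow_mem hH k))
  -- convergence
  have htt : |t ^ 2| < 1 := by
    rw [abs_pow]
    exact pow_lt_one₀ (abs_nonneg t) ht1 (by norm_num)
  have hc : Filter.Tendsto (fun k : ℕ => l * (t ^ 2) ^ k) Filter.atTop (nhds 0) := by
    have := (tendsto_pow_atTop_nhds_zero_of_abs_lt_one htt).const_mul l
    simpa using this
  have hFcont : Continuous (fun μ : ℝ => s • ((1 : M2) + μ • U0 x₀)) := by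
    fun_prop
  have hT : Filter.Tendsto
      (fun k : ℕ => ((H ^ k * P * (H ^ k)⁻¹ : SL2R) : M2)) Filter.atTop
      (nhds ((L : SL2R) : M2)) := by
    have h0 : ((L : SL2R) : M2) = s • ((1 : M2) + (0 : ℝ) • U0 x₀) := by
      rw [hLcoe]; simp
    rw [h0]
    have := (hFcont.tendsto 0).comp hc
    refine this.congr fun k => ?_
    simp only [Function.comp]
    exact (conj k).symm
  -- discreteness
  haveI := hD
  have hopen : IsOpen {(⟨L, hLmem⟩ : Γ)} := isOpen_discrete _
  rw [isOpen_induced_iff] at hopen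
  obtain ⟨U, hU, hUeq⟩ := hopen
  rw [isOpen_induced_iff] at hU
  obtain ⟨V, hV, hVeq⟩ := hU
  have hLV : ((L : SL2R) : M2) ∈ V := by
    have h1 : (⟨L, hLmem⟩ : Γ) ∈ (Subtype.val ⁻¹' U : Set Γ) := by
      rw [hUeq]; rfl
    have h2 : L ∈ U := h1
    rw [← hVeq] at h2
    exact h2
  have hev := hT.eventually (hV.eventually_mem hLV)
  obtain ⟨k, hk⟩ := hev.exists
  -- so the k-th conjugate equals L
  have hklem : (⟨H ^ k * P * (H ^ k)⁻¹, hmem k⟩ : Γ) ∈ ({(⟨L, hLmem⟩ : Γ)} : Set Γ) := by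
    rw [← hUeq]
    show (H ^ k * P * (H ^ k)⁻¹ : SL2R) ∈ U
    rw [← hVeq]
    exact hk
  have heq : (H ^ k * P * (H ^ k)⁻¹ : SL2R) = L := by
    have := hklem
    simpa [Subtype.ext_iff] using this
  have hmat : s • ((1 : M2) + (l * (t ^ 2) ^ k) • U0 x₀) = s • (1 : M2) := by
    rw [← conj k, heq, hLcoe]
  have := congrFun (congrFun hmat 1) 0
  simp [U0, Matrix.one_apply] at this
  rcases this with h | h
  · exact hs0 h
  · rcases h with h | ⟨h, -⟩
    · exact hl0 h
    · exact ht0 h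

end Keystone2

section Explicit

local notation "M2" => Matrix (Fin 2) (Fin 2) ℝ

variable (n : ℕ)

lemma nR_ne (hn : 0 < n) : (n : ℝ) ≠ 0 := Nat.cast_ne_zero.mpr hn.ne'

lemma sqrt_ne (hn : 0 < n) : Real.sqrt n ≠ 0 := by
  rw [Real.sqrt_ne_zero (Nat.cast_nonneg n)]
  exact_mod_cast hn.ne'

lemma coe_J (hn : 0 < n) : ((Wc n hn * Wa * Wc n hn : SL2R) : M2) = !![1, -(n:ℝ); 2/n, -1] := by
  have hs := sqrt_ne n hn
  have h0 := nR_ne n hn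
  rw [Matrix.SpecialLinearGroup.coe_mul, Matrix.SpecialLinearGroup.coe_mul]
  show ((1 / Real.sqrt n) • !![0, (n : ℝ); -1, 0]) * !![1, 2; -1, -1] *
      ((1 / Real.sqrt n) • !![0, (n : ℝ); -1, 0]) = _
  simp only [smul_mul_assoc, mul_smul_comm, smul_smul]
  rw [Matrix.mul_fin_two, Matrix.mul_fin_two]
  have hsc : 1 / Real.sqrt n * (1 / Real.sqrt n) = 1 / (n : ℝ) := by
    rw [div_mul_div_comm, one_mul, Real.mul_self_sqrt (Nat.cast_nonneg n)]
  rw [hsc]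
  ext i j
  fin_cases i <;> fin_cases j <;>
    (try simp [Matrix.smul_apply]) <;> (try field_simp) <;> (try ring)

lemma coe_T (hn : 0 < n) : ((Wa * Wb n hn * Wc n hn : SL2R) : M2) = !![1, -((n:ℝ)+2); 0, 1] := by
  have hs := sqrt_ne n hn
  have h0 := nR_ne n hn
  rw [Matrix.SpecialLinearGroup.coe_mul, Matrix.SpecialLinearGroup.coe_mul]
  show !![1, 2; -1, -1] * (Real.sqrt n • !![1, 1; -((n : ℝ) + 1) / n, -1]) *
      ((1 / Real.sqrt n) • !![0, (n : ℝ); -1, 0]) = _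
  simp only [smul_mul_assoc, mul_smul_comm, smul_smul]
  rw [Matrix.mul_fin_two, Matrix.mul_fin_two]
  have hsc : 1 / Real.sqrt n * Real.sqrt n = 1 := by
    rw [one_div_mul_cancel hs]
  rw [hsc, one_smul]
  ext i j
  fin_cases i <;> fin_cases j <;>
    (try simp) <;> (try field_simp) <;> (try ring)

lemma coe_Tinv (hn : 0 < n) : (((Wa * Wb n hn * Wc n hn)⁻¹ : SL2R) : M2) = !![1, (n:ℝ)+2; 0, 1] := by
  rw [Matrix.SpecialLinearGroup.coe_inv, coe_T n hn, Matrix.adjugate_fin_two]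
  ext i j
  fin_cases i <;> fin_cases j <;> simp

lemma upow (e : ℝ) (k : ℕ) : (!![1, e; 0, 1] : M2) ^ k = !![1, (k : ℝ) * e; 0, 1] := by
  induction k with
  | zero =>
    ext i j
    fin_cases i <;> fin_cases j <;> simp [Matrix.one_apply]
  | succ k ih =>
    rw [pow_succ, ih, Matrix.mul_fin_two]
    ext i j
    fin_cases i <;> fin_cases j <;> simp <;> push_cast <;> ring

lemma neg_one_mem (hn : 0 < n) : (-1 : SL2R) ∈ W n hn := by
  have hWa : Wa ∈ W n hn := Subgroup.subset_closure (by left; rfl)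
  have : (-1 : SL2R) = Wa * Wa := by
    apply Subtype.ext
    rw [Matrix.SpecialLinearGroup.coe_mul, Matrix.SpecialLinearGroup.coe_neg,
      Matrix.SpecialLinearGroup.coe_one]
    show _ = !![(1:ℝ), 2; -1, -1] * !![1, 2; -1, -1]
    rw [Matrix.mul_fin_two]
    ext i j
    fin_cases i <;> fin_cases j <;> simp [Matrix.one_apply] <;> norm_num
  rw [this]
  exact mul_mem hWa hWa

lemma Hmat_eq (hn : 0 < n) (u1 u2 : ℝ) :
    (!![1, -(n:ℝ); 2/n, -1] * !![1, u1; 0, 1] * !![1, -(n:ℝ); 2/n, -1] * !![1, u2; 0, 1] : M2)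
      = !![2*u1/n - 1, (2*u1/n - 1)*u2 - u1;
           4*u1/n^2, 4*u1*u2/n^2 - 1 - 2*u1/n] := by
  have h0 := nR_ne n hn
  rw [Matrix.mul_fin_two, Matrix.mul_fin_two, Matrix.mul_fin_two]
  ext i j
  fin_cases i <;> fin_cases j <;> (try simp) <;> (try field_simp) <;> (try ring)

end Explicit


section Main

local notation "M2" => Matrix (Fin 2) (Fin 2) ℝ

/-- For every `n ≥ 6` with `n ≡ 0, 2, 6 (mod 8)`, the Weierstrass group `W_n` is
not pseudomodular: it is not both discrete and with cusp set exactly `ℚ ∪ {∞}`. -/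
theorem weierstrass_not_pseudomodular (n : ℕ) (hn : 6 ≤ n)
    (h : n % 8 = 0 ∨ n % 8 = 2 ∨ n % 8 = 6) :
    ¬ (DiscreteTopology (W n (by omega)) ∧
        (∃ γ ∈ W n (by omega : 0 < n), IsParabolic γ ∧ FixesInfty γ) ∧
        (∀ q : ℚ, ∃ γ ∈ W n (by omega : 0 < n), IsParabolic γ ∧ FixesBoundary γ (q : ℝ)) ∧
        (∀ x : ℝ, (∃ γ ∈ W n (by omega : 0 < n), IsParabolic γ ∧ FixesBoundary γ x) →
          ∃ q : ℚ, x = (q : ℝ))) := by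
  rintro ⟨hD, -, hcusp, -⟩
  have hn' : 0 < n := by omega
  have h0 : (n : ℝ) ≠ 0 := nR_ne n hn'
  have hWa : Wa ∈ W n hn' := Subgroup.subset_closure (Set.mem_insert _ _)
  have hWb : Wb n hn' ∈ W n hn' :=
    Subgroup.subset_closure (Set.mem_insert_of_mem _ (Set.mem_insert _ _))
  have hWc : Wc n hn' ∈ W n hn' :=
    Subgroup.subset_closure (Set.mem_insert_of_mem _ (Set.mem_insert_of_mem _ rfl))
  have hJel : Wc n hn' * Wa * Wc n hn' ∈ W n hn' := mul_mem (mul_mem hWc hWa) hWc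
  have hTel : Wa * Wb n hn' * Wc n hn' ∈ W n hn' := mul_mem (mul_mem hWa hWb) hWc
  have hcase : (∃ j : ℕ, 1 ≤ j ∧ n = 4 * j + 2) ∨ (∃ m : ℕ, 1 ≤ m ∧ n = 8 * m) := by
    rcases h with h8 | h8 | h8
    · exact Or.inr ⟨n / 8, by omega, by omega⟩
    · exact Or.inl ⟨(n - 2) / 4, by omega, by omega⟩
    · exact Or.inl ⟨(n - 2) / 4, by omega, by omega⟩
  rcases hcase with ⟨j, hj1, hjn⟩ | ⟨m, hm1, hmn⟩
  · -- case n = 4j + 2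
    set Jr : ℝ := (j : ℝ) with hJrdef
    have hJr1 : (1 : ℝ) ≤ Jr := by rw [hJrdef]; exact_mod_cast hj1
    have hJr0 : Jr ≠ 0 := by linarith
    have h2J : (2 * Jr + 1) ≠ 0 := by linarith
    have hnr : (n : ℝ) = 4 * Jr + 2 := by rw [hjn]; push_cast; ring
    set x₀ : ℝ := (2 * Jr + 1) * (3 * Jr + 1) / Jr with hx₀
    set t : ℝ := -1 / (2 * Jr + 1) ^ 2 with ht
    have ht0 : t ≠ 0 := by
      rw [ht]
      apply div_ne_zero (by norm_num) (pow_ne_zero _ h2J)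
    have ht1 : |t| < 1 := by
      rw [ht, abs_div, abs_neg, abs_one, abs_pow]
      rw [div_lt_one (by positivity)]
      have : |2 * Jr + 1| = 2 * Jr + 1 := abs_of_pos (by linarith)
      rw [this]
      nlinarith
    set H : SL2R := (Wc n hn' * Wa * Wc n hn') *
        ((Wa * Wb n hn' * Wc n hn')⁻¹) ^ (j * j) *
        (Wc n hn' * Wa * Wc n hn') * (Wa * Wb n hn' * Wc n hn') with hH
    have hHmem : H ∈ W n hn' := by
      exact mul_mem (mul_mem (mul_mem hJel (pow_mem (inv_mem hTel) _)) hJel) hTel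
    have hu : ((j * j : ℕ) : ℝ) = Jr * Jr := by push_cast; ring
    have hcoeH : (H : M2) =
        !![2 * (Jr * Jr * ((n:ℝ)+2)) / n - 1,
            (2 * (Jr * Jr * ((n:ℝ)+2)) / n - 1) * (-((n:ℝ)+2)) - Jr * Jr * ((n:ℝ)+2);
          4 * (Jr * Jr * ((n:ℝ)+2)) / n ^ 2,
            4 * (Jr * Jr * ((n:ℝ)+2)) * (-((n:ℝ)+2)) / n ^ 2 - 1
              - 2 * (Jr * Jr * ((n:ℝ)+2)) / n] := by
      rw [hH, Matrix.SpecialLinearGroup.coe_mul, Matrix.SpecialLinearGroup.coe_mul,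
        Matrix.SpecialLinearGroup.coe_mul, Matrix.SpecialLinearGroup.coe_pow,
        coe_J n hn', coe_T n hn', coe_Tinv n hn', upow, hu,
        ← Hmat_eq n hn' (Jr * Jr * ((n:ℝ)+2)) (-((n:ℝ)+2))]
    have hv : (H : M2).mulVec ![x₀, 1] = t • ![x₀, 1] := by
      rw [hcoeH]
      funext i
      fin_cases i <;>
        simp [Matrix.mulVec, dotProduct, Fin.sum_univ_two, hx₀, ht, hnr] <;>
        field_simp <;> ring
    have hw : Matrix.vecMul ![1, -x₀] (H : M2) = t⁻¹ • ![1, -x₀] := by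
      rw [hcoeH]
      funext i
      fin_cases i <;>
        simp [Matrix.vecMul, dotProduct, Fin.sum_univ_two, hx₀, ht, hnr] <;>
        field_simp <;> ring
    set q : ℚ := (2 * (j:ℚ) + 1) * (3 * (j:ℚ) + 1) / (j:ℚ) with hq
    have hqx : ((q : ℚ) : ℝ) = x₀ := by
      rw [hq, hx₀, hJrdef]
      push_cast
      ring
    obtain ⟨γ, hγW, hγpar, hγfix⟩ := hcusp q
    rw [hqx] at hγfix
    exact keystone (W n hn') hD (neg_one_mem n hn') H γ hHmem hγW x₀ t ht0 ht1
      hv hw hγpar hγfix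
  · -- case n = 8m
    set Mr : ℝ := (m : ℝ) with hMrdef
    have hMr1 : (1 : ℝ) ≤ Mr := by rw [hMrdef]; exact_mod_cast hm1
    have hMr0 : Mr ≠ 0 := by linarith
    have hnr : (n : ℝ) = 8 * Mr := by rw [hmn]; push_cast; ring
    set x₀ : ℝ := 12 * Mr with hx₀
    set t : ℝ := 1 / (4 * Mr) with ht
    have ht0 : t ≠ 0 := by
      rw [ht]
      apply div_ne_zero (by norm_num) (by linarith)
    have ht1 : |t| < 1 := by
      rw [ht, abs_div, abs_one]
      rw [div_lt_one (by rw [abs_of_pos (by linarith)]; linarith)]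
      rw [abs_of_pos (by linarith : (0:ℝ) < 4 * Mr)]
      linarith
    set H : SL2R := (Wc n hn' * Wa * Wc n hn') *
        (Wa * Wb n hn' * Wc n hn') ^ m *
        (Wc n hn' * Wa * Wc n hn') * (Wa * Wb n hn' * Wc n hn') with hH
    have hHmem : H ∈ W n hn' := by
      exact mul_mem (mul_mem (mul_mem hJel (pow_mem hTel _)) hJel) hTel
    have hcoeH : (H : M2) =
        !![2 * (Mr * -((n:ℝ)+2)) / n - 1,
            (2 * (Mr * -((n:ℝ)+2)) / n - 1) * (-((n:ℝ)+2)) - Mr * -((n:ℝ)+2);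
          4 * (Mr * -((n:ℝ)+2)) / n ^ 2,
            4 * (Mr * -((n:ℝ)+2)) * (-((n:ℝ)+2)) / n ^ 2 - 1
              - 2 * (Mr * -((n:ℝ)+2)) / n] := by
      have hu : (!![1, -((n:ℝ)+2); 0, 1] : M2) ^ m = !![1, Mr * -((n:ℝ)+2); 0, 1] := by
        rw [upow, hMrdef]
      rw [hH, Matrix.SpecialLinearGroup.coe_mul, Matrix.SpecialLinearGroup.coe_mul,
        Matrix.SpecialLinearGroup.coe_mul, Matrix.SpecialLinearGroup.coe_pow,
        coe_J n hn', coe_T n hn', hu,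
        ← Hmat_eq n hn' (Mr * -((n:ℝ)+2)) (-((n:ℝ)+2))]
    have hv : (H : M2).mulVec ![x₀, 1] = t • ![x₀, 1] := by
      rw [hcoeH]
      funext i
      fin_cases i <;>
        simp [Matrix.mulVec, dotProduct, Fin.sum_univ_two, hx₀, ht, hnr] <;>
        field_simp <;> ring
    have hw : Matrix.vecMul ![1, -x₀] (H : M2) = t⁻¹ • ![1, -x₀] := by
      rw [hcoeH]
      funext i
      fin_cases i <;>
        simp [Matrix.vecMul, dotProduct, Fin.sum_univ_two, hx₀, ht, hnr] <;>
        field_simp <;> ring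
    set q : ℚ := 12 * (m : ℚ) with hq
    have hqx : ((q : ℚ) : ℝ) = x₀ := by
      rw [hq, hx₀, hMrdef]
      push_cast
      ring
    obtain ⟨γ, hγW, hγpar, hγfix⟩ := hcusp q
    rw [hqx] at hγfix
    exact keystone (W n hn') hD (neg_one_mem n hn') H γ hHmem hγW x₀ t ht0 ht1
      hv hw hγpar hγfix

end Main
end
end
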